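/- Let φ : Δ → ℝ be exponentially concave. Then the superdifferential map x ↦ ∂φ(x) takes nonempty values on Δ and is multiplicatively cyclically monotone: for every m ∈ ℕ, every cycle x_0, x_1, …, x_m ∈ Δ with x_m = x_0, and every choice y_i ∈ ∂φ(x_i), one has (i) ⟨y_i, x_{i+1} − x_i⟩ ≥ −1 for all i = 0,…,m−1, and (ii) ∏_{i=0}^{m−1} (1 + ⟨y_i, x_{i+1} − x_i⟩) ≥ 1. -/

import Mathlib

open scoped BigOperators

/-- The open unit simplex in `ℝ^d`. -/
def openSimplex (d : ℕ) : Set (Fin d → ℝ) :=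
  {x | (∀ i, 0 < x i) ∧ ∑ i, x i = 1}

/-- A function `φ` on the open simplex is exponentially concave if `e^φ` is concave there. -/
def ExpConcave {d : ℕ} (φ : (Fin d → ℝ) → ℝ) : Prop :=
  ConcaveOn ℝ (openSimplex d) (fun x => Real.exp (φ x))

/-- The superdifferential of `φ` at `x` (relative to the open simplex):
`{y | φ(q) ≤ φ(x) + ⟨y, q - x⟩ for all q ∈ Δ}`. -/
def superdiff {d : ℕ} (φ : (Fin d → ℝ) → ℝ) (x : Fin d → ℝ) : Set (Fin d → ℝ) :=
  {y | ∀ q ∈ openSimplex d, φ q ≤ φ x + ∑ k, y k * (q k - x k)}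

section Exists
variable {d : ℕ}

/-- the open positive cone -/
def posCone (d : ℕ) : Set (Fin d → ℝ) := {q | ∀ i, 0 < q i}

lemma isOpen_posCone : IsOpen (posCone d) := by
  have : posCone d = ⋂ i, {q : Fin d → ℝ | 0 < q i} := by
    ext q; simp [posCone, Set.mem_iInter]
  rw [this]
  exact isOpen_iInter_of_finite fun i =>
    isOpen_lt continuous_const (continuous_apply i)

lemma convex_posCone : Convex ℝ (posCone d) := by
  intro a ha b hb σ τ hσ hτ hστ i
  simp only [Pi.add_apply, Pi.smul_apply, smul_eq_mul]
  rcases hσ.eq_or_lt with h0 | h0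
  · have : τ = 1 := by linarith
    simpa [← h0, this] using hb i
  · have h1 : 0 < σ * a i := mul_pos h0 (ha i)
    have h2 : 0 ≤ τ * b i := mul_nonneg hτ (hb i).le
    linarith

lemma sum_pos_posCone (hd : 2 ≤ d) {q : Fin d → ℝ} (hq : q ∈ posCone d) :
    0 < ∑ i, q i := by
  have : Nonempty (Fin d) := ⟨⟨0, by omega⟩⟩
  exact Finset.sum_pos (fun i _ => hq i) Finset.univ_nonempty

lemma normalize_mem (hd : 2 ≤ d) {q : Fin d → ℝ} (hq : q ∈ posCone d) :
    (fun k => q k / ∑ i, q i) ∈ openSimplex d := by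
  have hs := sum_pos_posCone hd hq
  constructor
  · intro i; exact div_pos (hq i) hs
  · rw [← Finset.sum_div, div_self hs.ne']

theorem exists_supergrad {d : ℕ} (hd : 2 ≤ d) (φ : (Fin d → ℝ) → ℝ)
    (hφ : ExpConcave φ) {x : Fin d → ℝ} (hx : x ∈ openSimplex d) :
    ∃ z : Fin d → ℝ, ∀ q ∈ openSimplex d,
      Real.exp (φ q) ≤ Real.exp (φ x) + ∑ k, z k * (q k - x k) := by
  classical
  set F : (Fin d → ℝ) → ℝ :=
    fun q => (∑ i, q i) * Real.exp (φ (fun k => q k / ∑ i, q i)) with hFdef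
  have hFΔ : ∀ q ∈ openSimplex d, F q = Real.exp (φ q) := by
    intro q hq
    have : (fun k => q k / ∑ i, q i) = q := by
      funext k; rw [hq.2, div_one]
    rw [hFdef]; simp only [hq.2, div_one, one_mul]
  -- concavity of F on the cone
  have hFconc : ConcaveOn ℝ (posCone d) F := by
    refine ⟨convex_posCone, ?_⟩
    intro a ha b hb σ τ hσ hτ hστ
    set sa := ∑ i, a i with hsa'
    set sb := ∑ i, b i with hsb'
    have hsa : 0 < sa := sum_pos_posCone hd ha
    have hsb : 0 < sb := sum_pos_posCone hd hb
    have hw : ∑ i, (σ • a + τ • b) i = σ * sa + τ * sb := by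
      simp only [Pi.add_apply, Pi.smul_apply, smul_eq_mul]
      rw [Finset.sum_add_distrib, ← Finset.mul_sum, ← Finset.mul_sum]
    have hsw : 0 < σ * sa + τ * sb := by
      rcases hσ.eq_or_lt with h0 | h0
      · have hτ1 : τ = 1 := by linarith
        rw [← h0, hτ1]; simpa using hsb
      · have := mul_pos h0 hsa
        have := mul_nonneg hτ hsb.le
        linarith
    set μ := σ * sa / (σ * sa + τ * sb) with hμ'
    set ν := τ * sb / (σ * sa + τ * sb) with hν'
    have hμ0 : 0 ≤ μ := div_nonneg (mul_nonneg hσ hsa.le) hsw.le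
    have hν0 : 0 ≤ ν := div_nonneg (mul_nonneg hτ hsb.le) hsw.le
    have hμν : μ + ν = 1 := by
      rw [hμ', hν', ← add_div, div_self hsw.ne']
    have hkey := hφ.2 (normalize_mem hd ha) (normalize_mem hd hb) hμ0 hν0 hμν
    have harg : (fun k => (σ • a + τ • b) k / ∑ i, (σ • a + τ • b) i) =
        μ • (fun k => a k / sa) + ν • (fun k => b k / sb) := by
      funext k
      have hw2 := hw
      simp only [Pi.add_apply, Pi.smul_apply, smul_eq_mul] at hw2 ⊢
      rw [hw2, hμ', hν']
      field_simp
    rw [← harg] at hkey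
    have hkey' := mul_le_mul_of_nonneg_left hkey hsw.le
    rw [hw] at hkey'
    calc σ • F a + τ • F b
        = σ * (sa * Real.exp (φ fun k => a k / sa))
          + τ * (sb * Real.exp (φ fun k => b k / sb)) := by
          simp only [smul_eq_mul, hFdef]
          rfl
      _ = (σ * sa + τ * sb) * (μ • Real.exp (φ fun k => a k / sa)
            + ν • Real.exp (φ fun k => b k / sb)) := by
          simp only [smul_eq_mul, hμ', hν']
          field_simp
      _ ≤ (σ * sa + τ * sb) *
            Real.exp (φ fun k => (σ • a + τ • b) k / (σ * sa + τ * sb)) :=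
          hkey'
      _ = F (σ • a + τ • b) := by simp only [hFdef]; rw [hw]
  -- the strict hypograph is open and convex
  set S : Set ((Fin d → ℝ) × ℝ) := {p | p.1 ∈ posCone d ∧ p.2 < F p.1} with hSdef
  have hSopen : IsOpen S := by
    rw [isOpen_iff_mem_nhds]
    rintro ⟨q, t⟩ ⟨hqC, htq⟩
    have hcont : ContinuousAt F q :=
      (hFconc.continuousOn isOpen_posCone).continuousAt (isOpen_posCone.mem_nhds hqC)
    have h1 : ∀ᶠ p : (Fin d → ℝ) × ℝ in nhds (q, t), p.1 ∈ posCone d :=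
      (isOpen_posCone.preimage continuous_fst).mem_nhds hqC
    have hc2 : ContinuousAt (fun p : (Fin d → ℝ) × ℝ => F p.1 - p.2) (q, t) :=
      by
        have hc0 : ContinuousAt (fun p : (Fin d → ℝ) × ℝ => p.1) (q, t) := continuousAt_fst
        have := (hcont.comp hc0).sub
          (continuousAt_snd : ContinuousAt (fun p : (Fin d → ℝ) × ℝ => p.2) (q, t))
        exact this
    have h2 : ∀ᶠ p : (Fin d → ℝ) × ℝ in nhds (q, t), 0 < F p.1 - p.2 :=
      continuousAt_const.eventually_lt hc2 (by simpa using htq)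
    filter_upwards [h1, h2] with p hp1 hp2
    exact ⟨hp1, by linarith⟩
  have hSconv : Convex ℝ S := by
    rintro ⟨a, sₐ⟩ ⟨haC, hsa⟩ ⟨b, sᵦ⟩ ⟨hbC, hsb⟩ σ τ hσ hτ hστ
    refine ⟨convex_posCone haC hbC hσ hτ hστ, ?_⟩
    have hconc := hFconc.2 haC hbC hσ hτ hστ
    simp only [Prod.smul_mk, Prod.mk_add_mk, smul_eq_mul]
    have h1 : σ * sₐ + τ * sᵦ < σ * F a + τ * F b := by
      rcases hσ.eq_or_lt with h0 | h0
      · have hτ1 : τ = 1 := by linarith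
        rw [← h0, hτ1]; simpa using hsb
      · have := mul_lt_mul_of_pos_left hsa h0
        have := mul_le_mul_of_nonneg_left hsb.le hτ
        linarith
    have h2 : σ * F a + τ * F b ≤ F (σ • a + τ • b) := by
      simpa [smul_eq_mul] using hconc
    exact h1.trans_le h2
  have hxC : x ∈ posCone d := hx.1
  have hxS : (x, F x) ∉ S := fun h => lt_irrefl _ h.2
  obtain ⟨f, hf⟩ := geometric_hahn_banach_open_point hSconv hSopen hxS
  set c := f ((0 : Fin d → ℝ), (1 : ℝ)) with hc'
  have hsplit : ∀ (q : Fin d → ℝ) (t : ℝ), f (q, t) = f (q, 0) + t * c := by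
    intro q t
    have : (q, t) = ((q, (0:ℝ)) + t • ((0 : Fin d → ℝ), (1:ℝ))) := by
      simp [Prod.ext_iff]
    rw [this, map_add, map_smul, smul_eq_mul]
  have hcpos : 0 < c := by
    have hmem : ((x, F x - 1) : (Fin d → ℝ) × ℝ) ∈ S := ⟨hxC, by norm_num⟩
    have := hf _ hmem
    rw [hsplit x (F x - 1), hsplit x (F x)] at this
    nlinarith
  -- supporting inequality for F
  have hsupp : ∀ q ∈ posCone d, c * F q ≤ c * F x + (f (x, 0) - f (q, 0)) := by
    intro q hqC
    by_contra hcon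
    push_neg at hcon
    set t := (c * F x + (f (x, 0) - f (q, 0))) / c with ht'
    have htlt : t < F q := by
      rw [ht', div_lt_iff₀ hcpos]
      linarith [hcon]
    have hmem : ((q, t) : (Fin d → ℝ) × ℝ) ∈ S := ⟨hqC, htlt⟩
    have := hf _ hmem
    rw [hsplit q t, hsplit x (F x)] at this
    have htc : t * c = c * F x + (f (x, 0) - f (q, 0)) := by
      rw [ht']; field_simp
    nlinarith
  -- extract the vector
  set L : (Fin d → ℝ) →ₗ[ℝ] ℝ :=
    f.toLinearMap.comp (LinearMap.inl ℝ (Fin d → ℝ) ℝ) with hL'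
  have hLval : ∀ q : Fin d → ℝ, L q = f (q, 0) := fun q => rfl
  refine ⟨fun k => -(L (Pi.single k 1)) / c, ?_⟩
  intro q hq
  have h1 := hsupp q hq.1
  rw [hFΔ q hq, hFΔ x hx] at h1
  have hsum : ∑ k, (-(L (Pi.single k 1)) / c) * (q k - x k)
      = (f (x, 0) - f (q, 0)) / c := by
    rw [← hLval x, ← hLval q]
    rw [L.pi_apply_eq_sum_univ x, L.pi_apply_eq_sum_univ q]
    have hps : ∀ k : Fin d, (fun j => if k = j then (1:ℝ) else 0) = Pi.single k 1 := by
      intro k; funext j; simp [Pi.single_apply, eq_comm]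
    simp only [hps, smul_eq_mul]
    rw [← Finset.sum_sub_distrib, Finset.sum_div]
    apply Finset.sum_congr rfl
    intro k _
    field_simp
    ring
  rw [hsum, ← sub_le_iff_le_add', le_div_iff₀ hcpos]
  nlinarith [h1]
end Exists

lemma nonempty_superdiff {d : ℕ} (hd : 2 ≤ d) (φ : (Fin d → ℝ) → ℝ)
    (hφ : ExpConcave φ) {x : Fin d → ℝ} (hx : x ∈ openSimplex d) :
    (superdiff φ x).Nonempty := by
  obtain ⟨z, hz⟩ := exists_supergrad hd φ hφ hx
  refine ⟨fun k => z k / Real.exp (φ x), ?_⟩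
  intro q hq
  have hEx : 0 < Real.exp (φ x) := Real.exp_pos _
  have hEq : 0 < Real.exp (φ q) := Real.exp_pos _
  have h1 := hz q hq
  set u := ∑ k, z k * (q k - x k) with hu
  have hsum : ∑ k, (z k / Real.exp (φ x)) * (q k - x k) = u / Real.exp (φ x) := by
    rw [hu, Finset.sum_div]
    apply Finset.sum_congr rfl
    intro k _
    ring
  rw [hsum]
  set u' := u / Real.exp (φ x) with hu'
  have h2 : Real.exp (φ q) ≤ Real.exp (φ x) * (1 + u') := by
    rw [hu']; field_simp; linarith
  have h3 : 0 < 1 + u' := by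
    by_contra hcon
    push_neg at hcon
    nlinarith
  have h4 : φ q ≤ φ x + Real.log (1 + u') := by
    have := Real.log_le_log (by positivity) h2
    rwa [Real.log_exp, Real.log_mul hEx.ne' h3.ne', Real.log_exp] at this
  have h5 : Real.log (1 + u') ≤ u' := by
    have := Real.log_le_sub_one_of_pos h3
    linarith
  linarith

lemma slope_limit {s E : ℝ}
    (h : ∀ t : ℝ, t ∈ Set.Ioo (0:ℝ) 1 → t * (E - 1) ≤ Real.exp (t * s) - 1) :
    E - 1 ≤ s := by
  have hdv : HasDerivAt (fun t : ℝ => Real.exp (t * s)) s 0 := by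
    have h1 : HasDerivAt (fun t : ℝ => t * s) s 0 := hasDerivAt_mul_const s
    simpa using h1.exp
  have hs := hasDerivAt_iff_tendsto_slope.mp hdv
  have hs' : Filter.Tendsto (slope (fun t : ℝ => Real.exp (t * s)) 0)
      (nhdsWithin 0 (Set.Ioi 0)) (nhds s) :=
    hs.mono_left (nhdsWithin_mono _ (fun t ht => ne_of_gt ht))
  refine ge_of_tendsto hs' ?_
  filter_upwards [Ioo_mem_nhdsGT_of_mem
    (by constructor <;> norm_num : (0:ℝ) ∈ Set.Ico (0:ℝ) 1)] with t ht
  have ht0 : 0 < t := ht.1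
  have h' := h t ht
  rw [slope_def_field]
  simp only [zero_mul, Real.exp_zero, sub_zero]
  rw [le_div_iff₀ ht0]
  linarith

lemma key_ineq {d : ℕ} {φ : (Fin d → ℝ) → ℝ} (hφ : ExpConcave φ)
    {x q y : Fin d → ℝ} (hx : x ∈ openSimplex d) (hq : q ∈ openSimplex d)
    (hy : y ∈ superdiff φ x) :
    Real.exp (φ q - φ x) ≤ 1 + ∑ k, y k * (q k - x k) := by
  set s := ∑ k, y k * (q k - x k) with hs
  have hE : ∀ t : ℝ, t ∈ Set.Ioo (0:ℝ) 1 →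
      t * (Real.exp (φ q - φ x) - 1) ≤ Real.exp (t * s) - 1 := by
    intro t ht
    set z : Fin d → ℝ := fun k => (1 - t) * x k + t * q k with hzdef
    have hz : z ∈ openSimplex d := by
      constructor
      · intro i
        have := hx.1 i; have := hq.1 i
        have h1 : 0 < 1 - t := by linarith [ht.2]
        have := ht.1
        positivity
      · have : ∑ i, z i = (1 - t) * ∑ i, x i + t * ∑ i, q i := by
          rw [Finset.mul_sum, Finset.mul_sum, ← Finset.sum_add_distrib]
        rw [this, hx.2, hq.2]; ring
    have h1 : φ z ≤ φ x + t * s := by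
      have h := hy z hz
      have hsum : ∑ k, y k * (z k - x k) = t * s := by
        rw [hs, Finset.mul_sum]
        apply Finset.sum_congr rfl
        intro k _
        simp only [hzdef]; ring
      linarith [h, hsum ▸ h]
    have h2 : (1 - t) * Real.exp (φ x) + t * Real.exp (φ q) ≤ Real.exp (φ z) := by
      have hcb := hφ.2 hx hq (by linarith [ht.2] : (0:ℝ) ≤ 1 - t) ht.1.le (by ring)
      have harg : (1 - t) • x + t • q = z := by
        funext k; simp [hzdef, smul_eq_mul]
      rw [harg] at hcb
      simpa [smul_eq_mul] using hcb
    have h3 : Real.exp (φ z) ≤ Real.exp (φ x) * Real.exp (t * s) := by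
      rw [← Real.exp_add]
      exact Real.exp_le_exp.mpr h1
    have hEx : 0 < Real.exp (φ x) := Real.exp_pos _
    have hq' : Real.exp (φ q) = Real.exp (φ q - φ x) * Real.exp (φ x) := by
      rw [← Real.exp_add]; ring_nf
    rw [hq'] at h2
    have h4 : (1 - t) + t * Real.exp (φ q - φ x) ≤ Real.exp (t * s) := by
      have := h2.trans h3
      nlinarith [this, hEx]
    linarith
  have := slope_limit hE
  linarith

/-- the superdifferential of an exponentially concave function takes
nonempty values on the open simplex and is multiplicatively cyclically monotone. -/
theorem statement3 {d : ℕ} (hd : 2 ≤ d)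
    (φ : (Fin d → ℝ) → ℝ) (hφ : ExpConcave φ) :
    (∀ x ∈ openSimplex d, (superdiff φ x).Nonempty) ∧
    (∀ (m : ℕ) (x y : ℕ → Fin d → ℝ),
      (∀ i, i ≤ m → x i ∈ openSimplex d) → x m = x 0 →
      (∀ i, i < m → y i ∈ superdiff φ (x i)) →
      (∀ i, i < m → -1 ≤ ∑ k, y i k * (x (i + 1) k - x i k)) ∧
      1 ≤ ∏ i ∈ Finset.range m, (1 + ∑ k, y i k * (x (i + 1) k - x i k))) := by
  constructor
  · intro x hx
    exact nonempty_superdiff hd φ hφ hx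
  · intro m x y hxmem hcycle hymem
    have hkey : ∀ i, i < m →
        Real.exp (φ (x (i + 1)) - φ (x i)) ≤ 1 + ∑ k, y i k * (x (i + 1) k - x i k) := by
      intro i hi
      exact key_ineq hφ (hxmem i hi.le) (hxmem (i + 1) hi) (hymem i hi)
    constructor
    · intro i hi
      have h1 := hkey i hi
      have h2 : 0 < Real.exp (φ (x (i + 1)) - φ (x i)) := Real.exp_pos _
      linarith
    · calc (1 : ℝ) = ∏ i ∈ Finset.range m, Real.exp (φ (x (i + 1)) - φ (x i)) := by
            rw [← Real.exp_sum, Finset.sum_range_sub (fun i => φ (x i)), hcycle,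
              sub_self, Real.exp_zero]
        _ ≤ ∏ i ∈ Finset.range m, (1 + ∑ k, y i k * (x (i + 1) k - x i k)) := by
            apply Finset.prod_le_prod
            · intro i _; exact (Real.exp_pos _).le
            · intro i hi; exact hkey i (Finset.mem_range.mp hi)
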